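/- Consider the central spin system of 1 + N spin-1/2 particles: complex matrices indexed by Fin 2 × (Fin N → Fin 2). For a 2×2 matrix m, the central embedding m^{(c)} has entries m^{(c)} (i,f) (j,g) = m i j if f = g and 0 otherwise; for B ∈ M_N, the bath embedding B^{(b)} has entries B^{(b)} (i,f) (j,g) = B f g if i = j and 0 otherwise. Let g ∈ ℂ and H_int := g·(τ₊^{(c)} * S₋^{(b)} + τ₋^{(c)} * S₊^{(b)}), where τ₊ = σ₊ = !![0,1;0,0] and τ₋ = σ₋ = !![0,0;1,0]. Then H_int * S₋^{(b)} − S₋^{(b)} * H_int = g · (τ₋^{(c)} * S_z^{(b)}). -/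

import Mathlib

open Matrix

/-- The Pauli lowering operator `σ₋`. -/
def σm : Matrix (Fin 2) (Fin 2) ℂ := !![0, 0; 1, 0]

/-- The Pauli raising operator `σ₊`. -/
def σp : Matrix (Fin 2) (Fin 2) ℂ := !![0, 1; 0, 0]

/-- The Pauli matrix `σ_z`. -/
def σz : Matrix (Fin 2) (Fin 2) ℂ := !![1, 0; 0, -1]

/-- Embedding of a single-spin operator `m` at site `k` of an `N`-spin system:
`m^{(k)} f g = m (f k) (g k)` if `f j = g j` for all `j ≠ k`, and `0` otherwise. -/
def embed {N : ℕ} (m : Matrix (Fin 2) (Fin 2) ℂ) (k : Fin N) :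
    Matrix (Fin N → Fin 2) (Fin N → Fin 2) ℂ :=
  fun f g => if ∀ j, j ≠ k → f j = g j then m (f k) (g k) else 0

lemma embed_mul_same {N : ℕ} (m n : Matrix (Fin 2) (Fin 2) ℂ) (k : Fin N) :
    embed m k * embed n k = embed (m * n) k := by
  ext f g
  show _ = embed (m*n) k f g
  rw [mul_apply, embed]
  by_cases hfg : ∀ j, j ≠ k → f j = g j
  · rw [if_pos hfg, mul_apply]
    rw [← Finset.sum_subset (Finset.subset_univ
        (Finset.image (fun x => Function.update f k x) Finset.univ))
        (fun h _ hh => by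
          have : ¬ ∀ j, j ≠ k → f j = h j := by
            intro hc
            apply hh
            simp only [Finset.mem_image, Finset.mem_univ, true_and]
            exact ⟨h k, funext fun j => by
              by_cases hj : j = k
              · subst hj; simp
              · simp [Function.update_of_ne hj, (hc j hj).symm]⟩
          simp [embed, this])]
    rw [Finset.sum_image (fun a _ b _ hab => Function.update_injective f k hab)]
    apply Finset.sum_congr rfl
    intro x _
    have c1 : ∀ j, j ≠ k → f j = Function.update f k x j :=
      fun j hj => (Function.update_of_ne hj x f).symm
    have c2 : ∀ j, j ≠ k → Function.update f k x j = g j :=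
      fun j hj => (Function.update_of_ne hj x f).trans (hfg j hj)
    simp only [embed, Function.update_self]
    rw [if_pos c1, if_pos c2]
  · rw [if_neg hfg]
    apply Finset.sum_eq_zero
    intro h _
    by_cases h1 : ∀ j, j ≠ k → f j = h j
    · have h2 : ¬ ∀ j, j ≠ k → h j = g j :=
        fun hc => hfg fun j hj => (h1 j hj).trans (hc j hj)
      simp [embed, h2]
    · simp [embed, h1]

lemma embed_mul_apply_ne {N : ℕ} (m n : Matrix (Fin 2) (Fin 2) ℂ) {k l : Fin N}
    (hkl : k ≠ l) (f g : Fin N → Fin 2) :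
    (embed m k * embed n l) f g =
      if ∀ j, j ≠ k → j ≠ l → f j = g j then m (f k) (g k) * n (f l) (g l) else 0 := by
  rw [mul_apply]
  by_cases hfg : ∀ j, j ≠ k → j ≠ l → f j = g j
  · rw [if_pos hfg]
    rw [Finset.sum_eq_single (Function.update f k (g k))]
    · have c1 : ∀ j, j ≠ k → f j = Function.update f k (g k) j :=
        fun j hj => (Function.update_of_ne hj _ f).symm
      have c2 : ∀ j, j ≠ l → Function.update f k (g k) j = g j := by
        intro j hj
        by_cases hjk : j = k
        · subst hjk; simp
        · rw [Function.update_of_ne hjk]; exact hfg j hjk hj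
      simp only [embed, Function.update_self, Function.update_of_ne hkl.symm]
      rw [if_pos c1, if_pos c2]
    · intro h _ hne
      by_cases h1 : ∀ j, j ≠ k → f j = h j
      · have : ¬ ∀ j, j ≠ l → h j = g j := by
          intro hc
          apply hne
          funext j
          by_cases hj : j = k
          · subst hj; rw [Function.update_self]; exact hc j hkl
          · rw [Function.update_of_ne hj]; exact (h1 j hj).symm
        simp [embed, this]
      · simp [embed, h1]
    · simp
  · rw [if_neg hfg]
    apply Finset.sum_eq_zero
    intro h _
    by_cases h1 : ∀ j, j ≠ k → f j = h j
    · by_cases h2 : ∀ j, j ≠ l → h j = g j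
      · exact absurd (fun j hjk hjl => (h1 j hjk).trans (h2 j hjl)) hfg
      · simp [embed, h2]
    · simp [embed, h1]

lemma embed_comm {N : ℕ} (m n : Matrix (Fin 2) (Fin 2) ℂ) {k l : Fin N} (hkl : k ≠ l) :
    embed m k * embed n l = embed n l * embed m k := by
  ext f g
  rw [embed_mul_apply_ne m n hkl, embed_mul_apply_ne n m hkl.symm]
  exact if_congr ⟨fun h j h1 h2 => h j h2 h1, fun h j h1 h2 => h j h2 h1⟩ (mul_comm _ _) rfl

lemma embed_sub {N : ℕ} (a b : Matrix (Fin 2) (Fin 2) ℂ) (k : Fin N) :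
    embed (a - b) k = embed a k - embed b k := by
  ext f g
  simp only [embed, Matrix.sub_apply]
  split <;> simp

/-- The collective lowering operator `S₋ = ∑ₖ σ₋^{(k)}`. -/
noncomputable def Sminus (N : ℕ) : Matrix (Fin N → Fin 2) (Fin N → Fin 2) ℂ := ∑ k, embed σm k

/-- The collective raising operator `S₊ = ∑ₖ σ₊^{(k)}`. -/
noncomputable def Splus (N : ℕ) : Matrix (Fin N → Fin 2) (Fin N → Fin 2) ℂ := ∑ k, embed σp k

/-- The collective operator `S_z = ∑ₖ σ_z^{(k)}`. -/
noncomputable def Sz (N : ℕ) : Matrix (Fin N → Fin 2) (Fin N → Fin 2) ℂ := ∑ k, embed σz k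

lemma pauli_comm : σp * σm - σm * σp = σz := by
  ext i j
  fin_cases i <;> fin_cases j <;>
    simp [σp, σm, σz, mul_apply, Fin.sum_univ_two]

lemma SpSm_comm (N : ℕ) : Splus N * Sminus N - Sminus N * Splus N = Sz N := by
  unfold Splus Sminus Sz
  rw [Finset.sum_mul_sum, Finset.sum_mul_sum, Finset.sum_comm (s := Finset.univ)]
  rw [← Finset.sum_sub_distrib]
  apply Finset.sum_congr rfl
  intro k _
  rw [← Finset.sum_sub_distrib]
  rw [Finset.sum_eq_single k]
  · rw [embed_mul_same, embed_mul_same, ← embed_sub, pauli_comm]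
  · intro l _ hlk
    rw [embed_comm σp σm hlk]
    exact sub_self _
  · simp

/-- Embedding of a single-spin operator acting on the central spin of the
`1 + N` spin system. -/
def cembed {N : ℕ} (m : Matrix (Fin 2) (Fin 2) ℂ) :
    Matrix (Fin 2 × (Fin N → Fin 2)) (Fin 2 × (Fin N → Fin 2)) ℂ :=
  fun p q => if p.2 = q.2 then m p.1 q.1 else 0

/-- Embedding of a bath operator into the `1 + N` spin system. -/
def bembed {N : ℕ} (B : Matrix (Fin N → Fin 2) (Fin N → Fin 2) ℂ) :
    Matrix (Fin 2 × (Fin N → Fin 2)) (Fin 2 × (Fin N → Fin 2)) ℂ :=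
  fun p q => if p.1 = q.1 then B p.2 q.2 else 0

lemma cembed_mul_bembed_apply {N : ℕ} (m : Matrix (Fin 2) (Fin 2) ℂ)
    (B : Matrix (Fin N → Fin 2) (Fin N → Fin 2) ℂ) (p q : Fin 2 × (Fin N → Fin 2)) :
    (cembed (N := N) m * bembed B) p q = m p.1 q.1 * B p.2 q.2 := by
  rw [mul_apply]
  rw [Fintype.sum_prod_type]
  simp [cembed, bembed, Finset.sum_ite_eq, Finset.sum_ite_eq']

lemma bembed_mul_cembed_apply {N : ℕ} (m : Matrix (Fin 2) (Fin 2) ℂ)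
    (B : Matrix (Fin N → Fin 2) (Fin N → Fin 2) ℂ) (p q : Fin 2 × (Fin N → Fin 2)) :
    (bembed B * cembed (N := N) m) p q = m p.1 q.1 * B p.2 q.2 := by
  rw [mul_apply]
  rw [Fintype.sum_prod_type]
  simp [cembed, bembed, Finset.sum_ite_eq, Finset.sum_ite_eq', mul_comm]

lemma cembed_bembed_comm {N : ℕ} (m : Matrix (Fin 2) (Fin 2) ℂ)
    (B : Matrix (Fin N → Fin 2) (Fin N → Fin 2) ℂ) :
    cembed m * bembed B = bembed B * cembed m := by
  ext p q
  rw [cembed_mul_bembed_apply, bembed_mul_cembed_apply]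

lemma bembed_mul {N : ℕ} (A B : Matrix (Fin N → Fin 2) (Fin N → Fin 2) ℂ) :
    bembed A * bembed B = bembed (A * B) := by
  ext ⟨i, f⟩ ⟨j, g⟩
  rw [mul_apply, Fintype.sum_prod_type]
  simp only [bembed]
  by_cases h : i = j
  · subst h
    rw [if_pos rfl, mul_apply]
    simp [Finset.sum_ite_eq, Finset.mul_sum]
  · rw [if_neg h]
    apply Finset.sum_eq_zero
    intro x _
    apply Finset.sum_eq_zero
    intro y _
    by_cases h1 : i = x
    · subst h1; rw [if_neg h, mul_zero]
    · rw [if_neg h1, zero_mul]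

lemma bembed_sub {N : ℕ} (A B : Matrix (Fin N → Fin 2) (Fin N → Fin 2) ℂ) :
    bembed (A - B) = bembed A - bembed B := by
  ext p q
  simp only [bembed, Matrix.sub_apply]
  split <;> simp

/-- The exact finite-`N` commutator of the central-spin interaction Hamiltonian
`H_int = g (τ₊ S₋ + τ₋ S₊)` with the collective lowering operator:
`[H_int, S₋] = g τ₋ S_z`. -/
theorem interaction_commutator (N : ℕ) (g : ℂ)
    (Hint : Matrix (Fin 2 × (Fin N → Fin 2)) (Fin 2 × (Fin N → Fin 2)) ℂ)
    (hH : Hint = g • (cembed σp * bembed (Sminus N) + cembed σm * bembed (Splus N))) :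
    Hint * bembed (Sminus N) - bembed (Sminus N) * Hint
      = g • (cembed σm * bembed (Sz N)) := by
  subst hH
  rw [smul_mul_assoc, mul_smul_comm, ← smul_sub]
  congr 1
  rw [add_mul, mul_add]
  rw [mul_assoc (cembed σp), mul_assoc (cembed σm)]
  rw [← mul_assoc (bembed (Sminus N)) (cembed σp), ← cembed_bembed_comm σp,
      ← mul_assoc (bembed (Sminus N)) (cembed σm), ← cembed_bembed_comm σm]
  rw [mul_assoc (cembed σp), mul_assoc (cembed σm)]
  simp only [bembed_mul]
  have h1 : ∀ (A B C : Matrix (Fin 2 × (Fin N → Fin 2)) (Fin 2 × (Fin N → Fin 2)) ℂ),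
      A + B - (A + C) = B - C := fun A B C => by abel
  rw [h1, ← mul_sub, ← bembed_sub, SpSm_comm]
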